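/- Let B ∈ R^{m×m} be nonsingular with positive definite symmetric part H = (B + B^T)/2 and skew-symmetric part K = (B − B^T)/2, and suppose λ_min(H) > ρ(K), where ρ(K) is the spectral radius of K. Then for every nonzero v ∈ R^m, (v^T B^T B v)/(v^T H v) ≥ λ_min(H) − ρ(K)^2/λ_min(H) > 0. -/

import Mathlib

open Matrix

/-- Smallest eigenvalue of a real symmetric matrix. -/
noncomputable def lamMin {m : ℕ} {M : Matrix (Fin m) (Fin m) ℝ}
    (hM : M.IsHermitian) : ℝ := ⨅ i, hM.eigenvalues i

/-- Spectral radius of a real matrix: the largest modulus of its complex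
eigenvalues. -/
noncomputable def specRad {m : ℕ} (M : Matrix (Fin m) (Fin m) ℝ) : ℝ :=
  sSup ((fun z : ℂ => ‖z‖) '' spectrum ℂ (M.map (Complex.ofReal)))


lemma shift_posSemidef {m : ℕ} {A : Matrix (Fin m) (Fin m) ℝ} (hA : A.IsHermitian)
    {c : ℝ} (h : ∀ i, c ≤ hA.eigenvalues i) : (A - c • 1).PosSemidef := by
  have hst := hA.spectral_theorem
  rw [Unitary.conjStarAlgAut_apply] at hst
  set U : Matrix (Fin m) (Fin m) ℝ := (hA.eigenvectorUnitary : Matrix (Fin m) (Fin m) ℝ) with hUdef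
  have hU : U * star U = 1 := (Matrix.mem_unitaryGroup_iff).mp hA.eigenvectorUnitary.2
  have h2 : diagonal (fun i => hA.eigenvalues i - c)
      = diagonal ((RCLike.ofReal : ℝ → ℝ) ∘ hA.eigenvalues) - c • (1 : Matrix (Fin m) (Fin m) ℝ) := by
    ext i j
    by_cases hij : i = j <;>
      simp [diagonal, hij, Matrix.sub_apply, Matrix.smul_apply, Matrix.one_apply]
  have key : A - c • 1 = U * diagonal (fun i => hA.eigenvalues i - c) * star U := by
    rw [h2, Matrix.mul_sub, Matrix.sub_mul, ← hst]
    congr 1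
    rw [Matrix.mul_smul, Matrix.smul_mul, mul_one, hU]
  rw [key, Matrix.star_eq_conjTranspose]
  exact (Matrix.posSemidef_diagonal_iff.mpr fun i => by linarith [h i]).mul_mul_conjTranspose_same U

lemma shift_posSemidef' {m : ℕ} {A : Matrix (Fin m) (Fin m) ℝ} (hA : A.IsHermitian)
    {c : ℝ} (h : ∀ i, hA.eigenvalues i ≤ c) : (c • 1 - A).PosSemidef := by
  have hst := hA.spectral_theorem
  rw [Unitary.conjStarAlgAut_apply] at hst
  set U : Matrix (Fin m) (Fin m) ℝ := (hA.eigenvectorUnitary : Matrix (Fin m) (Fin m) ℝ) with hUdef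
  have hU : U * star U = 1 := (Matrix.mem_unitaryGroup_iff).mp hA.eigenvectorUnitary.2
  have h2 : diagonal (fun i => c - hA.eigenvalues i)
      = c • (1 : Matrix (Fin m) (Fin m) ℝ) - diagonal ((RCLike.ofReal : ℝ → ℝ) ∘ hA.eigenvalues) := by
    ext i j
    by_cases hij : i = j <;>
      simp [diagonal, hij, Matrix.sub_apply, Matrix.smul_apply, Matrix.one_apply]
  have key : c • 1 - A = U * diagonal (fun i => c - hA.eigenvalues i) * star U := by
    rw [h2, Matrix.mul_sub, Matrix.sub_mul, ← hst]
    congr 1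
    rw [Matrix.mul_smul, Matrix.smul_mul, mul_one, hU]
  rw [key, Matrix.star_eq_conjTranspose]
  exact (Matrix.posSemidef_diagonal_iff.mpr fun i => by linarith [h i]).mul_mul_conjTranspose_same U

lemma rayleigh_lower {m : ℕ} {A : Matrix (Fin m) (Fin m) ℝ} (hA : A.IsHermitian)
    {c : ℝ} (h : ∀ i, c ≤ hA.eigenvalues i) (v : Fin m → ℝ) :
    c * (v ⬝ᵥ v) ≤ v ⬝ᵥ A *ᵥ v := by
  have := (shift_posSemidef hA h).dotProduct_mulVec_nonneg v
  simp only [star_trivial, Matrix.sub_mulVec, dotProduct_sub, Matrix.smul_mulVec,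
    Matrix.one_mulVec, dotProduct_smul, smul_eq_mul] at this
  linarith

lemma rayleigh_upper {m : ℕ} {A : Matrix (Fin m) (Fin m) ℝ} (hA : A.IsHermitian)
    {c : ℝ} (h : ∀ i, hA.eigenvalues i ≤ c) (v : Fin m → ℝ) :
    v ⬝ᵥ A *ᵥ v ≤ c * (v ⬝ᵥ v) := by
  have := (shift_posSemidef' hA h).dotProduct_mulVec_nonneg v
  simp only [star_trivial, Matrix.sub_mulVec, dotProduct_sub, Matrix.smul_mulVec,
    Matrix.one_mulVec, dotProduct_smul, smul_eq_mul] at this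
  linarith

lemma ofReal_mem_spectrum {m : ℕ} {M : Matrix (Fin m) (Fin m) ℝ} {r : ℝ}
    (h : r ∈ spectrum ℝ M) : (r : ℂ) ∈ spectrum ℂ (M.map Complex.ofReal) := by
  rw [spectrum.mem_iff] at h ⊢
  intro hu
  apply h
  have hmap : (algebraMap ℝ (Matrix (Fin m) (Fin m) ℝ) r - M).map Complex.ofReal
      = algebraMap ℂ (Matrix (Fin m) (Fin m) ℂ) (r : ℂ) - M.map Complex.ofReal := by
    ext i j
    simp [Matrix.map_apply, Matrix.sub_apply, Matrix.algebraMap_matrix_apply, apply_ite Complex.ofReal]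
  rw [← hmap] at hu
  rw [Matrix.isUnit_iff_isUnit_det] at hu ⊢
  have hdet := Complex.ofRealHom.map_det (algebraMap ℝ (Matrix (Fin m) (Fin m) ℝ) r - M)
  rw [RingHom.mapMatrix_apply] at hdet
  have : Complex.ofRealHom ((algebraMap ℝ (Matrix (Fin m) (Fin m) ℝ) r - M).det) ≠ 0 := by
    rw [hdet]; exact isUnit_iff_ne_zero.mp hu
  refine isUnit_iff_ne_zero.mpr fun h0 => this ?_
  rw [h0]; simp

lemma dot_mul_symm {m : ℕ} {S : Matrix (Fin m) (Fin m) ℝ} (hS : Sᵀ = S)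
    (u w : Fin m → ℝ) : u ⬝ᵥ S *ᵥ w = (S *ᵥ u) ⬝ᵥ w := by
  rw [Matrix.dotProduct_mulVec, ← Matrix.mulVec_transpose, hS]

/-- Key inequality for the SWI convergence proof: if `B = H + K` is
nonsingular with symmetric part `H` positive definite, skew-symmetric part `K`,
and `λ_min(H) > ρ(K)`, then for every nonzero `v`,
`(vᵀH²v + vᵀK²v)/(vᵀHv) ≥ λ_min(H) − ρ(K)²/λ_min(H) > 0`. -/
theorem swi_key_inequality {m : ℕ}
    (B H K : Matrix (Fin m) (Fin m) ℝ)
    (hBunit : IsUnit B)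
    (hHdef : H = ((1 : ℝ) / 2) • (B + Bᵀ))
    (hKdef : K = ((1 : ℝ) / 2) • (B - Bᵀ))
    (hH : H.PosDef)
    (hgap : specRad K < lamMin hH.1) :
    ∀ v : Fin m → ℝ, v ≠ 0 →
      lamMin hH.1 - specRad K ^ 2 / lamMin hH.1 ≤
          (v ⬝ᵥ (H * H) *ᵥ v + v ⬝ᵥ (K * K) *ᵥ v) / (v ⬝ᵥ H *ᵥ v) ∧
        0 < lamMin hH.1 - specRad K ^ 2 / lamMin hH.1 := by
  intro v hv
  rcases Nat.eq_zero_or_pos m with hm | hm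
  · subst hm
    exact absurd (Subsingleton.elim v 0) hv
  haveI : NeZero m := ⟨hm.ne'⟩
  set lam := lamMin hH.1 with hlamdef
  set rho := specRad K with hrhodef
  have hlam_le : ∀ i, lam ≤ hH.1.eigenvalues i := fun i =>
    ciInf_le (Finite.bddBelow_range _) i
  have hlam_pos : 0 < lam := by
    obtain ⟨i, hi⟩ := exists_eq_ciInf_of_finite (f := fun i => hH.1.eigenvalues i)
    rw [hlamdef, lamMin, ← hi]
    exact hH.eigenvalues_pos i
  have hrho_nonneg : 0 ≤ rho :=
    Real.sSup_nonneg fun x hx => by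
      obtain ⟨z, _, rfl⟩ := hx
      exact norm_nonneg z
  have hpos : 0 < lam - rho ^ 2 / lam := by
    rw [sub_pos, div_lt_iff₀ hlam_pos]
    nlinarith
  refine ⟨?_, hpos⟩
  -- skew symmetry
  have hKskew : Kᵀ = -K := by
    rw [hKdef]
    ext i j
    simp [Matrix.transpose_apply, Matrix.smul_apply, Matrix.sub_apply]
    ring
  -- denominator
  have hd : 0 < v ⬝ᵥ H *ᵥ v := by
    have := hH.dotProduct_mulVec_pos hv
    simpa using this
  -- H² bound via sqrt
  obtain ⟨S, hSS, hSherm⟩ : ∃ S : Matrix (Fin m) (Fin m) ℝ, S * S = H ∧ S.IsHermitian := by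
    open MatrixOrder in
    exact ⟨CFC.sqrt H, CFC.sqrt_mul_sqrt_self H hH.posSemidef.nonneg,
      (CFC.sqrt_nonneg H).posSemidef.1⟩
  have hSt : Sᵀ = S := by
    have := hSherm.eq
    rwa [Matrix.conjTranspose_eq_transpose_of_trivial] at this
  set w := S *ᵥ v with hwdef
  have e2 : w ⬝ᵥ w = v ⬝ᵥ H *ᵥ v := by
    rw [hwdef, ← dot_mul_symm hSt, Matrix.mulVec_mulVec, hSS]
  have hHH : H * H = S * H * S := by
    rw [← hSS]
    noncomm_ring
  have e1 : v ⬝ᵥ (H * H) *ᵥ v = w ⬝ᵥ H *ᵥ w := by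
    rw [hHH, hwdef, ← dot_mul_symm hSt]
    simp [Matrix.mulVec_mulVec, Matrix.mul_assoc]
  have ha : lam * (v ⬝ᵥ H *ᵥ v) ≤ v ⬝ᵥ (H * H) *ᵥ v := by
    rw [e1, ← e2]
    exact rayleigh_lower hH.1 hlam_le w
  -- K part
  have hNps : (Kᴴ * K).PosSemidef := Matrix.posSemidef_conjTranspose_mul_self K
  have hKH : Kᴴ = Kᵀ := Matrix.conjTranspose_eq_transpose_of_trivial K
  have hKK : K * K = -(Kᴴ * K) := by
    rw [hKH, hKskew]
    simp [Matrix.neg_mul]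
  have eig_le : ∀ i, hNps.1.eigenvalues i ≤ rho ^ 2 := by
    intro i
    set μ := hNps.1.eigenvalues i with hμdef
    have hμ0 : 0 ≤ μ := hNps.eigenvalues_nonneg i
    have hmemC : (μ : ℂ) ∈ spectrum ℂ ((Kᴴ * K).map Complex.ofReal) :=
      ofReal_mem_spectrum (hNps.1.eigenvalues_mem_spectrum_real i)
    set Kc : Matrix (Fin m) (Fin m) ℂ := K.map Complex.ofReal with hKcdef
    have hmapmul : (Kᴴ * K).map Complex.ofReal = -(Kc ^ 2) := by
      rw [hKH, hKskew, Matrix.neg_mul, sq]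
      ext i j
      simp [hKcdef, Matrix.map_apply, Matrix.neg_apply, Matrix.mul_apply]
    rw [hmapmul, ← spectrum.neg_eq, Set.mem_neg] at hmemC
    rw [spectrum.map_pow_of_pos Kc (by norm_num : (0:ℕ) < 2)] at hmemC
    obtain ⟨z, hzmem, hz2'⟩ := hmemC
    have hz2 : z ^ 2 = -(μ : ℂ) := hz2'
    have habs : ‖z‖ ≤ rho :=
      le_csSup (((Matrix.finite_spectrum Kc).image _).bddAbove) ⟨z, hzmem, rfl⟩
    have hμeq : μ = ‖z‖ ^ 2 := by
      have : ‖z ^ 2‖ = ‖(-(μ : ℂ))‖ := by rw [hz2]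
      rw [norm_pow, norm_neg] at this
      rw [this, Complex.norm_real, Real.norm_of_nonneg hμ0]
    rw [hμeq]
    exact pow_le_pow_left₀ (norm_nonneg z) habs 2
  have key3 : v ⬝ᵥ (Kᴴ * K) *ᵥ v ≤ rho ^ 2 * (v ⬝ᵥ v) := rayleigh_upper hNps.1 eig_le v
  have hvv : lam * (v ⬝ᵥ v) ≤ v ⬝ᵥ H *ᵥ v := rayleigh_lower hH.1 hlam_le v
  have hb : v ⬝ᵥ (K * K) *ᵥ v = -(v ⬝ᵥ (Kᴴ * K) *ᵥ v) := by
    rw [hKK, Matrix.neg_mulVec, dotProduct_neg]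
  rw [le_div_iff₀ hd]
  have hq0 : 0 ≤ rho ^ 2 / lam := div_nonneg (sq_nonneg rho) hlam_pos.le
  have hql : rho ^ 2 / lam * lam = rho ^ 2 := div_mul_cancel₀ _ hlam_pos.ne'
  have hstep : rho ^ 2 * (v ⬝ᵥ v) ≤ rho ^ 2 / lam * (v ⬝ᵥ H *ᵥ v) := by
    calc rho ^ 2 * (v ⬝ᵥ v) = rho ^ 2 / lam * (lam * (v ⬝ᵥ v)) := by
          rw [← mul_assoc, hql]
      _ ≤ rho ^ 2 / lam * (v ⬝ᵥ H *ᵥ v) := by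
          exact mul_le_mul_of_nonneg_left hvv hq0
  have : (lam - rho ^ 2 / lam) * (v ⬝ᵥ H *ᵥ v)
      = lam * (v ⬝ᵥ H *ᵥ v) - rho ^ 2 / lam * (v ⬝ᵥ H *ᵥ v) := by ring
  rw [this, hb]
  linarith
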